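/- For any symbols P(λ) = Σ_{n≤N} pₙλⁿ and Q(λ) = Σ_{n≤M} qₙλⁿ with coefficients in R, one has Res_λ P(λ)Q(−λ) dλ = h · Res_∂ ( P(h∂) · Q(h∂)* ); explicitly, Σ_{i+j=−1} (−1)ʲ pᵢ qⱼ = h · Res_∂ ( P(h∂) · Q(h∂)* ). -/

import Mathlib

open scoped BigOperators

/-- Generalized binomial coefficient `C(k,l) = k(k-1)⋯(k-l+1)/l!` for `k : ℤ`. -/
def gbinom (k : ℤ) (l : ℕ) : ℚ :=
  (∏ i ∈ Finset.range l, ((k : ℚ) - i)) / (Nat.factorial l)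

/-- Pseudo-differential operators (and symbols): coefficient functions `ℤ → R`
with support bounded above.  The parameter `d` (the derivation) determines the product. -/
structure PDO (R : Type) [CommRing R] [Algebra ℚ R] (d : R →+ R) where
  coeff : ℤ → R
  bdd : ∃ N : ℤ, ∀ n : ℤ, N < n → coeff n = 0

namespace PDO

variable {R : Type} [CommRing R] [Algebra ℚ R] {d : R →+ R}

theorem ext' {A B : PDO R d} (h : A.coeff = B.coeff) : A = B := by
  cases A; cases B; cases h; rfl

set_option linter.unusedSectionVars false in
theorem iterD_zero (d : R →+ R) (j : ℕ) : d^[j] (0 : R) = 0 := by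
  induction j with
  | zero => rfl
  | succ j ih => rw [Function.iterate_succ_apply', ih, map_zero]

instance : Zero (PDO R d) := ⟨⟨fun _ => 0, ⟨0, fun _ _ => rfl⟩⟩⟩

instance : One (PDO R d) :=
  ⟨⟨fun n => if n = 0 then 1 else 0, ⟨0, fun n hn => if_neg (by omega)⟩⟩⟩

instance : Add (PDO R d) :=
  ⟨fun A B => ⟨fun n => A.coeff n + B.coeff n, by
    obtain ⟨N, hN⟩ := A.bdd
    obtain ⟨M, hM⟩ := B.bdd
    exact ⟨max N M, fun n hn => by
      show A.coeff n + B.coeff n = 0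
      rw [hN n (lt_of_le_of_lt (le_max_left N M) hn),
        hM n (lt_of_le_of_lt (le_max_right N M) hn), add_zero]⟩⟩⟩

instance : Neg (PDO R d) :=
  ⟨fun A => ⟨fun n => -A.coeff n, by
    obtain ⟨N, hN⟩ := A.bdd
    exact ⟨N, fun n hn => by show -A.coeff n = 0; rw [hN n hn, neg_zero]⟩⟩⟩

instance : SMul ℚ (PDO R d) :=
  ⟨fun c A => ⟨fun n => c • A.coeff n, by
    obtain ⟨N, hN⟩ := A.bdd
    exact ⟨N, fun n hn => by show c • A.coeff n = 0; rw [hN n hn, smul_zero]⟩⟩⟩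

instance : AddCommGroup (PDO R d) where
  add := (· + ·)
  zero := 0
  neg := Neg.neg
  add_assoc A B C := ext' (funext fun n => add_assoc (A.coeff n) (B.coeff n) (C.coeff n))
  zero_add A := ext' (funext fun n => zero_add (A.coeff n))
  add_zero A := ext' (funext fun n => add_zero (A.coeff n))
  add_comm A B := ext' (funext fun n => add_comm (A.coeff n) (B.coeff n))
  neg_add_cancel A := ext' (funext fun n => neg_add_cancel (A.coeff n))
  nsmul := nsmulRec
  zsmul := zsmulRec

/-- The product of pseudo-differential operators, determined by the commutation rule
`∂^k · f = Σ_{l ≥ 0} C(k,l) (∂^l f) ∂^(k-l)`. -/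
noncomputable instance : Mul (PDO R d) :=
  ⟨fun A B =>
    ⟨fun n => ∑ᶠ (k : ℤ) (m : ℤ),
        if _ : 0 ≤ k + m - n then
          A.coeff k * (gbinom k (k + m - n).toNat • (d^[(k + m - n).toNat] (B.coeff m)))
        else 0, by
      obtain ⟨N, hN⟩ := A.bdd
      obtain ⟨M, hM⟩ := B.bdd
      refine ⟨N + M, fun n hn => ?_⟩
      have hz : ∀ k m : ℤ,
          (if _ : 0 ≤ k + m - n then
            A.coeff k * (gbinom k (k + m - n).toNat • (d^[(k + m - n).toNat] (B.coeff m)))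
          else 0) = 0 := by
        intro k m
        by_cases hl : 0 ≤ k + m - n
        · rw [dif_pos hl]
          by_cases hk : N < k
          · rw [hN k hk, zero_mul]
          · rw [hM m (by omega), iterD_zero, smul_zero, mul_zero]
        · rw [dif_neg hl]
      simp only [hz, finsum_zero]⟩⟩

noncomputable def npow (A : PDO R d) : ℕ → PDO R d
  | 0 => 1
  | n + 1 => npow A n * A

noncomputable instance : Pow (PDO R d) ℕ := ⟨fun A n => A.npow n⟩

/-- The monomial `r ∂^k`. -/
def mono (r : R) (k : ℤ) : PDO R d :=
  ⟨fun n => if n = k then r else 0, ⟨k, fun n hn => if_neg (by omega)⟩⟩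

/-- The constant (order-zero) operator `r`. -/
def const (r : R) : PDO R d := mono r 0

/-- The operator `∂`. -/
def del : PDO R d := mono (1 : R) 1

/-- The operator `h∂`. -/
def hdel (h : Rˣ) : PDO R d := mono (h : R) 1

/-- The Lax operator `L = h²∂² + 2u`. -/
def Lop (h : Rˣ) (u : R) : PDO R d :=
  ⟨fun n => if n = 2 then (h : R) ^ 2 else if n = 0 then 2 * u else 0,
   ⟨2, fun n hn => by
      show (if n = 2 then (h : R) ^ 2 else if n = 0 then 2 * u else 0) = 0
      rw [if_neg (by omega), if_neg (by omega)]⟩⟩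

/-- The differential part `A₊`. -/
def pos (A : PDO R d) : PDO R d :=
  ⟨fun n => if 0 ≤ n then A.coeff n else 0, by
    obtain ⟨N, hN⟩ := A.bdd
    refine ⟨N, fun n hn => ?_⟩
    show (if 0 ≤ n then A.coeff n else 0) = 0
    by_cases h0 : (0 : ℤ) ≤ n
    · rw [if_pos h0]; exact hN n hn
    · rw [if_neg h0]⟩

/-- The integral part `A₋ = A − A₊`. -/
def negp (A : PDO R d) : PDO R d :=
  ⟨fun n => if n < 0 then A.coeff n else 0, ⟨0, fun n hn => if_neg (by omega)⟩⟩

/-- The residue `Res_∂ A = a₋₁`. -/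
def res (A : PDO R d) : R := A.coeff (-1)

/-- The formal adjoint, determined by `(f ∂^k)* = (−∂)^k · f`. -/
noncomputable def adj (A : PDO R d) : PDO R d :=
  ⟨fun n => ∑ᶠ k : ℤ,
      if _ : 0 ≤ k - n then
        (((-1 : ℚ) ^ k) * gbinom k (k - n).toNat) • (d^[(k - n).toNat] (A.coeff k))
      else 0, by
    obtain ⟨N, hN⟩ := A.bdd
    refine ⟨N, fun n hn => ?_⟩
    have hz : ∀ k : ℤ, (if _ : 0 ≤ k - n then
        (((-1 : ℚ) ^ k) * gbinom k (k - n).toNat) • (d^[(k - n).toNat] (A.coeff k))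
      else 0) = 0 := by
      intro k
      by_cases hl : 0 ≤ k - n
      · rw [dif_pos hl, hN k (by omega), iterD_zero, smul_zero]
      · rw [dif_neg hl]
    simp only [hz, finsum_zero]⟩

/-- The operator `P(h∂) = Σ pₙ hⁿ ∂ⁿ` associated to the symbol `P(λ) = Σ pₙ λⁿ`. -/
noncomputable def ofSymbol (h : Rˣ) (A : PDO R d) : PDO R d :=
  ⟨fun n => A.coeff n * ((h ^ n : Rˣ) : R), by
    obtain ⟨N, hN⟩ := A.bdd
    exact ⟨N, fun n hn => by show A.coeff n * ((h ^ n : Rˣ) : R) = 0; rw [hN n hn, zero_mul]⟩⟩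

/-- Apply `d^[i]` to each coefficient. -/
def mapD (i : ℕ) (A : PDO R d) : PDO R d :=
  ⟨fun n => d^[i] (A.coeff n), by
    obtain ⟨N, hN⟩ := A.bdd
    exact ⟨N, fun n hn => by show d^[i] (A.coeff n) = 0; rw [hN n hn, iterD_zero]⟩⟩

/-- The coefficientwise extension of an additive map `D : R →+ R`. -/
def mapHom (D : R →+ R) (A : PDO R d) : PDO R d :=
  ⟨fun n => D (A.coeff n), by
    obtain ⟨N, hN⟩ := A.bdd
    exact ⟨N, fun n hn => by show D (A.coeff n) = 0; rw [hN n hn, map_zero]⟩⟩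

/-- The commutator `[A, B] = AB − BA`. -/
noncomputable def comm (A B : PDO R d) : PDO R d := A * B - B * A

end PDO

/-- The Leibniz rule: `d` is a derivation. -/
def Leibniz {R : Type} [CommRing R] [Algebra ℚ R] (d : R →+ R) : Prop :=
  ∀ a b : R, d (a * b) = a * d b + b * d a

/-- `aₙ = 1/(2n+1)!!`. -/
def kdvA (n : ℕ) : ℚ := 1 / (Nat.doubleFactorial (2 * n + 1))

/-- `bₙ = (2n−1)!!` (with `b₀ = (−1)!! = 1`). -/
def kdvB (n : ℕ) : ℚ := (Nat.doubleFactorial (2 * n - 1) : ℕ)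


section Aux

open Finset

variable {R : Type} [CommRing R] [Algebra ℚ R] {d : R →+ R}

lemma gbinom_zero (k : ℤ) : gbinom k 0 = 1 := by simp [gbinom]

lemma gbinom_eq_choose (k : ℤ) (t : ℕ) : gbinom k t = Ring.choose (k : ℚ) t := by
  have hprod : (descPochhammer ℤ t).smeval (k:ℚ) = ∏ i ∈ Finset.range t, ((k:ℚ) - i) := by
    induction t with
    | zero => simp [descPochhammer_zero, Polynomial.smeval_one]
    | succ n ih =>
      rw [descPochhammer_succ_right, Polynomial.smeval_mul, ih, Finset.prod_range_succ,
        Polynomial.smeval_sub, Polynomial.smeval_X, Polynomial.smeval_natCast]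
      simp
  have h2 := Ring.descPochhammer_eq_factorial_smul_choose (k:ℚ) t
  rw [hprod] at h2
  have h3 : (Nat.factorial t : ℚ) ≠ 0 := Nat.cast_ne_zero.mpr (Nat.factorial_ne_zero t)
  unfold gbinom
  rw [h2, nsmul_eq_mul]
  field_simp

lemma gbinom_vandermonde (x y : ℤ) (t : ℕ) :
    ∑ p ∈ Finset.HasAntidiagonal.antidiagonal t, gbinom x p.1 * gbinom y p.2 = gbinom (x + y) t := by
  simp only [gbinom_eq_choose]
  rw [← Ring.add_choose_eq t (Commute.all _ _)]
  push_cast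
  rfl

lemma gbinom_eq_zero {z : ℤ} (hz : 0 ≤ z) {t : ℕ} (ht : z < (t:ℤ)) : gbinom z t = 0 := by
  unfold gbinom
  rw [Finset.prod_eq_zero (i := z.toNat) (by simp only [Finset.mem_range]; omega)]
  · simp
  · have : ((z.toNat : ℕ) : ℚ) = (z : ℚ) := by
      exact_mod_cast congrArg (fun n : ℤ => (n : ℚ)) (Int.toNat_of_nonneg hz)
    rw [this, sub_self]

lemma sum_gbinom_eq (k j : ℤ) (hkj : -1 - k ≤ j) :
    ∑ m ∈ Finset.Icc (-1-k) j, gbinom k (k+m+1).toNat * gbinom j (j-m).toNat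
      = gbinom (k+j) (k+j+1).toNat := by
  rw [← gbinom_vandermonde]
  refine Finset.sum_bij' (fun m _ => ((k+m+1).toNat, (j-m).toNat))
    (fun p _ => (p.1 : ℤ) - k - 1) ?_ ?_ ?_ ?_ ?_
  · intro m hm
    simp only [Finset.mem_Icc] at hm
    simp only [Finset.HasAntidiagonal.mem_antidiagonal]
    omega
  · intro p hp
    simp only [Finset.HasAntidiagonal.mem_antidiagonal] at hp
    simp only [Finset.mem_Icc]
    omega
  · intro m hm; simp only [Finset.mem_Icc] at hm
    show ((k+m+1).toNat : ℤ) - k - 1 = m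
    omega
  · intro p hp
    simp only [Finset.HasAntidiagonal.mem_antidiagonal] at hp
    show ((k + ((p.1:ℤ) - k - 1) + 1).toNat, (j - ((p.1:ℤ) - k - 1)).toNat) = p
    have h1 : (k + ((p.1:ℤ) - k - 1) + 1).toNat = p.1 := by omega
    have h2 : (j - ((p.1:ℤ) - k - 1)).toNat = p.2 := by omega
    rw [h1, h2]
  · intro m hm; rfl

lemma sum_gbinom (k j : ℤ) (hkj : -1 - k ≤ j) :
    ∑ m ∈ Finset.Icc (-1-k) j, gbinom k (k+m+1).toNat * gbinom j (j-m).toNat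
      = if j = -1 - k then 1 else 0 := by
  rw [sum_gbinom_eq k j hkj]
  by_cases hj : j = -1 - k
  · rw [if_pos hj]
    have h0 : (k+j+1).toNat = 0 := by omega
    rw [h0, gbinom_zero]
  · rw [if_neg hj]
    exact gbinom_eq_zero (by omega) (by omega)

lemma iterD_add (d : R →+ R) (s : ℕ) (a b : R) :
    d^[s] (a + b) = d^[s] a + d^[s] b := by
  induction s with
  | zero => rfl
  | succ s ih =>
    rw [Function.iterate_succ_apply', Function.iterate_succ_apply',
      Function.iterate_succ_apply', ih, map_add]

/-- The iterate `d^[s]` as an additive homomorphism. -/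
def iterHom (d : R →+ R) (s : ℕ) : R →+ R where
  toFun := d^[s]
  map_zero' := PDO.iterD_zero d s
  map_add' := iterD_add d s

lemma iter_smul (d : R →+ R) (s : ℕ) (c : ℚ) (x : R) : d^[s] (c • x) = c • d^[s] x :=
  map_rat_smul (iterHom d s) c x

lemma mul_coeff (A B : PDO R d) (n : ℤ) :
    (A * B).coeff n = ∑ᶠ (k : ℤ) (m : ℤ),
      if _ : 0 ≤ k + m - n then
        A.coeff k * (gbinom k (k + m - n).toNat • (d^[(k + m - n).toNat] (B.coeff m)))
      else 0 := rfl

lemma adj_coeff (A : PDO R d) (n : ℤ) :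
    (PDO.adj A).coeff n = ∑ᶠ k : ℤ,
      if _ : 0 ≤ k - n then
        (((-1 : ℚ) ^ k) * gbinom k (k - n).toNat) • (d^[(k - n).toNat] (A.coeff k))
      else 0 := rfl

lemma ofSymbol_coeff (h : Rˣ) (A : PDO R d) (n : ℤ) :
    (PDO.ofSymbol h A).coeff n = A.coeff n * ((h ^ n : Rˣ) : R) := rfl

/-- Summand in the adjoint coefficient. -/
noncomputable def gJ (h : Rˣ) (Q : PDO R d) (j m : ℤ) : R :=
  if _ : 0 ≤ j - m then
    (((-1 : ℚ) ^ j) * gbinom j (j - m).toNat) • (d^[(j - m).toNat] ((PDO.ofSymbol h Q).coeff j))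
  else 0

/-- Summand in the product coefficient at `-1`. -/
noncomputable def FF (h : Rˣ) (P Q : PDO R d) (k m : ℤ) : R :=
  if _ : 0 ≤ k + m - (-1) then
    (PDO.ofSymbol h P).coeff k *
      (gbinom k (k + m - (-1)).toNat •
        (d^[(k + m - (-1)).toNat] ((PDO.adj (PDO.ofSymbol h Q)).coeff m)))
  else 0

/-- Fully expanded triple summand. -/
noncomputable def TT (h : Rˣ) (P Q : PDO R d) (k m j : ℤ) : R :=
  (PDO.ofSymbol h P).coeff k *
    (gbinom k (k + m - (-1)).toNat • (d^[(k + m - (-1)).toNat] (gJ h Q j m)))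

end Aux

/-- `Res_λ P(λ)Q(−λ) dλ = h · Res_∂ (P(h∂) · Q(h∂)*)`, i.e.
`Σ_(i+j=−1) (−1)ʲ pᵢ qⱼ = h · Res_∂ (P(h∂) · Q(h∂)*)`. -/
theorem residue_of_symbol_product
    (R : Type) [CommRing R] [Algebra ℚ R] (d : R →+ R)
    (hd : Leibniz d) (h : Rˣ) (hdh : d (h : R) = 0)
    (P Q : PDO R d) :
    (∑ᶠ i : ℤ, ((-1 : ℚ) ^ (-1 - i)) • (P.coeff i * Q.coeff (-1 - i)))
      = (h : R) * PDO.res (PDO.ofSymbol h P * PDO.adj (PDO.ofSymbol h Q)) := by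
  classical
  open Finset in
  obtain ⟨N0, hN⟩ := P.bdd
  obtain ⟨M0, hM⟩ := Q.bdd
  have hA : ∀ k : ℤ, N0 < k → (PDO.ofSymbol h P).coeff k = 0 := by
    intro k hk; rw [ofSymbol_coeff, hN k hk, zero_mul]
  have hQ' : ∀ j : ℤ, M0 < j → (PDO.ofSymbol h Q).coeff j = 0 := by
    intro j hj; rw [ofSymbol_coeff, hM j hj, zero_mul]
  have hgJ : ∀ j m : ℤ, (¬ m ≤ j ∨ M0 < j) → gJ h Q j m = 0 := by
    intro j m hc
    unfold gJ
    rcases hc with hc | hc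
    · rw [dif_neg (by omega)]
    · by_cases h0 : 0 ≤ j - m
      · rw [dif_pos h0, hQ' j hc, PDO.iterD_zero, smul_zero]
      · rw [dif_neg h0]
  have hBco : ∀ m : ℤ, (PDO.adj (PDO.ofSymbol h Q)).coeff m = ∑ᶠ j : ℤ, gJ h Q j m :=
    fun m => rfl
  have hB : ∀ m : ℤ, M0 < m → (PDO.adj (PDO.ofSymbol h Q)).coeff m = 0 := by
    intro m hm
    rw [hBco]
    refine finsum_eq_zero_of_forall_eq_zero fun j => ?_
    by_cases hmj : m ≤ j
    · exact hgJ j m (Or.inr (by omega))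
    · exact hgJ j m (Or.inl hmj)
  have hFF0 : ∀ k m : ℤ, (N0 < k ∨ m + k < -1 ∨ M0 < m) → FF h P Q k m = 0 := by
    intro k m hc
    unfold FF
    by_cases h0 : 0 ≤ k + m - (-1)
    · rw [dif_pos h0]
      rcases hc with hc | hc | hc
      · rw [hA k hc, zero_mul]
      · exact absurd h0 (by omega)
      · rw [hB m hc, PDO.iterD_zero, smul_zero, mul_zero]
    · rw [dif_neg h0]
  have hres : PDO.res (PDO.ofSymbol h P * PDO.adj (PDO.ofSymbol h Q))
      = ∑ k ∈ Finset.Icc (-1-M0) N0, ((-1:ℚ) ^ (-1-k)) •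
          ((PDO.ofSymbol h P).coeff k * (PDO.ofSymbol h Q).coeff (-1-k)) := by
    have h0 : PDO.res (PDO.ofSymbol h P * PDO.adj (PDO.ofSymbol h Q))
        = ∑ᶠ (k : ℤ), ∑ᶠ (m : ℤ), FF h P Q k m := rfl
    rw [h0]
    have hsub1 : (Function.support fun k : ℤ => ∑ᶠ m : ℤ, FF h P Q k m)
        ⊆ ↑(Finset.Icc (-1-M0) N0) := by
      intro k hk
      simp only [Function.mem_support] at hk
      simp only [Finset.coe_Icc, Set.mem_Icc]
      by_contra hmem
      exact hk (finsum_eq_zero_of_forall_eq_zero fun m => hFF0 k m (by omega))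
    rw [finsum_eq_sum_of_support_subset _ hsub1]
    have hinner : ∀ k : ℤ, ∑ᶠ m : ℤ, FF h P Q k m = ∑ m ∈ Finset.Icc (-1-k) M0, FF h P Q k m := by
      intro k
      refine finsum_eq_sum_of_support_subset _ ?_
      intro m hm
      simp only [Function.mem_support] at hm
      simp only [Finset.coe_Icc, Set.mem_Icc]
      by_contra hmem
      exact hm (hFF0 k m (by omega))
    refine Finset.sum_congr rfl fun k hk => ?_
    rw [Finset.mem_Icc] at hk
    rw [hinner k]
    have hFT : ∀ m ∈ Finset.Icc (-1-k) M0, FF h P Q k m = ∑ j ∈ Finset.Icc m M0, TT h P Q k m j := by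
      intro m hm
      rw [Finset.mem_Icc] at hm
      unfold FF
      rw [dif_pos (by omega : (0:ℤ) ≤ k + m - (-1))]
      have hBm : (PDO.adj (PDO.ofSymbol h Q)).coeff m = ∑ j ∈ Finset.Icc m M0, gJ h Q j m := by
        rw [hBco]
        refine finsum_eq_sum_of_support_subset _ ?_
        intro j hj
        simp only [Function.mem_support] at hj
        simp only [Finset.coe_Icc, Set.mem_Icc]
        by_contra hmem
        exact hj (hgJ j m (by omega))
      rw [hBm]
      have hds : d^[(k + m - (-1)).toNat] (∑ j ∈ Finset.Icc m M0, gJ h Q j m)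
          = ∑ j ∈ Finset.Icc m M0, d^[(k + m - (-1)).toNat] (gJ h Q j m) :=
        map_sum (iterHom d ((k + m - (-1)).toNat)) _ _
      rw [hds, Finset.smul_sum, Finset.mul_sum]
      rfl
    rw [Finset.sum_congr rfl hFT]
    rw [Finset.sum_comm' (t' := Finset.Icc (-1-k) M0) (s' := fun j => Finset.Icc (-1-k) j)
      (fun m j => by simp only [Finset.mem_Icc]; omega)]
    have hjj : ∀ j ∈ Finset.Icc (-1-k) M0, ∑ m ∈ Finset.Icc (-1-k) j, TT h P Q k m j
        = if j = -1-k then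
            ((-1:ℚ) ^ j) • ((PDO.ofSymbol h P).coeff k *
              d^[(k+j+1).toNat] ((PDO.ofSymbol h Q).coeff j))
          else 0 := by
      intro j hj
      rw [Finset.mem_Icc] at hj
      have hTv : ∀ m ∈ Finset.Icc (-1-k) j, TT h P Q k m j
          = (gbinom k (k+m+1).toNat * gbinom j (j-m).toNat) •
            (((-1:ℚ) ^ j) • ((PDO.ofSymbol h P).coeff k *
              d^[(k+j+1).toNat] ((PDO.ofSymbol h Q).coeff j))) := by
        intro m hm
        rw [Finset.mem_Icc] at hm
        unfold TT gJ
        rw [dif_pos (by omega : (0:ℤ) ≤ j - m)]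
        rw [iter_smul]
        have hiter : d^[(k + m - (-1)).toNat] (d^[(j - m).toNat] ((PDO.ofSymbol h Q).coeff j))
            = d^[(k+j+1).toNat] ((PDO.ofSymbol h Q).coeff j) := by
          rw [← Function.iterate_add_apply]
          congr 1
          omega
        rw [hiter]
        have he : (k + m - (-1)).toNat = (k + m + 1).toNat := by omega
        rw [he]
        simp only [smul_smul, mul_smul_comm]
        congr 1
        ring
      rw [Finset.sum_congr rfl hTv, ← Finset.sum_smul, sum_gbinom k j (by omega),
        ite_smul, one_smul, zero_smul]
    rw [Finset.sum_congr rfl hjj, Finset.sum_ite_eq' (Finset.Icc (-1-k) M0) (-1-k),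
      if_pos (by rw [Finset.mem_Icc]; omega)]
    rw [show (k + (-1-k) + 1).toNat = 0 from by omega, Function.iterate_zero_apply]
  rw [hres]
  have hsubL : (Function.support fun i : ℤ => ((-1:ℚ) ^ (-1 - i)) • (P.coeff i * Q.coeff (-1 - i)))
      ⊆ ↑(Finset.Icc (-1-M0) N0) := by
    intro i hi
    simp only [Function.mem_support] at hi
    simp only [Finset.coe_Icc, Set.mem_Icc]
    by_contra hmem
    apply hi
    rcases (by omega : N0 < i ∨ M0 < -1 - i) with hc | hc
    · rw [hN i hc, zero_mul, smul_zero]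
    · rw [hM _ hc, mul_zero, smul_zero]
  rw [finsum_eq_sum_of_support_subset _ hsubL, Finset.mul_sum]
  refine Finset.sum_congr rfl fun k hk => ?_
  rw [Finset.mem_Icc] at hk
  rw [ofSymbol_coeff, ofSymbol_coeff, mul_smul_comm]
  congr 1
  have huu : h ^ k * h ^ (-1 - k) * h = 1 := by
    rw [← zpow_add]
    rw [show k + (-1 - k) = -1 from by ring, zpow_neg_one, inv_mul_cancel]
  have hu : ((h ^ k : Rˣ) : R) * ((h ^ (-1 - k) : Rˣ) : R) * (h : R) = 1 := by
    rw [← Units.val_mul, ← Units.val_mul, huu, Units.val_one]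
  rw [show (h:R) * (P.coeff k * ((h ^ k : Rˣ) : R) * (Q.coeff (-1-k) * ((h ^ (-1-k) : Rˣ) : R)))
      = (P.coeff k * Q.coeff (-1-k)) * (((h ^ k : Rˣ) : R) * ((h ^ (-1-k) : Rˣ) : R) * (h:R))
    from by ring, hu, mul_one]
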